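/- Let G be a d-regular graph (d ≥ 3), U ⊆ V non-empty, θ ∈ [0,1), and define edge weights w(u,v) = (1-θ)^{max{dist(u,U),dist(v,U)}} with induced transition matrix Q(x,y) = w(x,y)/w(x) for x∼y. Then for any ε with θ ≤ ε ≤ 1, there exists a stochastic matrix B supported on the edges of G such that (1-ε)P + εB = Q, where P is the simple random walk transition matrix. -/

import Mathlib

open Finset

/-- The graph distance from a vertex `v` to a set of vertices `U`. -/
noncomputable def setDist {V : Type*} (G : SimpleGraph V) (U : Finset V) (v : V) : ℕ :=
  sInf ((fun u => G.dist v u) '' (U : Set V))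

theorem stmt_11 {V : Type*} [Fintype V] [DecidableEq V] (G : SimpleGraph V)
    [DecidableRel G.Adj] (hconn : G.Connected) (d : ℕ) (hd : 3 ≤ d)
    (hreg : G.IsRegularOfDegree d)
    (U : Finset V) (hU : U.Nonempty) (θ : ℝ) (hθ0 : 0 ≤ θ) (hθ1 : θ < 1)
    (w : V → V → ℝ)
    (hw : ∀ x y, w x y = (1 - θ) ^ max (setDist G U x) (setDist G U y))
    (ε : ℝ) (hεθ : θ ≤ ε) (hε1 : ε ≤ 1) :
    ∃ B : V → V → ℝ,
      (∀ x y, 0 ≤ B x y) ∧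
      (∀ x y, ¬ G.Adj x y → B x y = 0) ∧
      (∀ x, ∑ y, B x y = 1) ∧
      (∀ x y,
        (1 - ε) * (if G.Adj x y then (1 : ℝ) / d else 0) + ε * B x y =
          (if G.Adj x y then w x y / (∑ z ∈ G.neighborFinset x, w x z) else 0)) := by
  classical
  set f : V → ℕ := setDist G U with hf
  have hθ' : (0:ℝ) < 1 - θ := by linarith
  have hθ'' : (1:ℝ) - θ ≤ 1 := by linarith
  have hdpos : (0:ℝ) < d := by positivity
  have hne : ∀ v : V, ((fun u => G.dist v u) '' (U : Set V)).Nonempty := by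
    intro v
    exact Set.Nonempty.image _ (by exact_mod_cast hU)
  have hmem : ∀ v, f v ∈ ((fun u => G.dist v u) '' (U : Set V)) :=
    fun v => Nat.sInf_mem (hne v)
  have hle : ∀ x y, G.Adj x y → f x ≤ f y + 1 := by
    intro x y hxy
    obtain ⟨u, hu, hdu⟩ := hmem y
    have hdu' : G.dist y u = f y := hdu
    have h1 : G.dist x u ≤ G.dist x y + G.dist y u := hconn.dist_triangle
    have h2 : G.dist x y = 1 := (SimpleGraph.dist_eq_one_iff_adj).mpr hxy
    have h3 : f x ≤ G.dist x u := Nat.sInf_le ⟨u, hu, rfl⟩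
    omega
  have hfle : ∀ x y, G.Adj x y → max (f x) (f y) ≤ f x + 1 := by
    intro x y hxy
    exact max_le (by omega) (hle y x hxy.symm)
  have hwpos : ∀ x y, 0 < w x y := by
    intro x y; rw [hw]; positivity
  have hwub : ∀ x y, w x y ≤ (1-θ) ^ (f x) := by
    intro x y; rw [hw]
    exact pow_le_pow_of_le_one hθ'.le hθ'' (le_max_left _ _)
  have hwlb : ∀ x y, G.Adj x y → (1-θ) ^ (f x + 1) ≤ w x y := by
    intro x y hxy; rw [hw]
    exact pow_le_pow_of_le_one hθ'.le hθ'' (hfle x y hxy)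
  set W : V → ℝ := fun x => ∑ z ∈ G.neighborFinset x, w x z with hW
  have hcard : ∀ x, (G.neighborFinset x).card = d := hreg
  have hWub : ∀ x, W x ≤ d * (1-θ) ^ (f x) := by
    intro x
    calc W x ≤ (G.neighborFinset x).card • ((1-θ) ^ (f x)) :=
          Finset.sum_le_card_nsmul _ _ _ (fun z _ => hwub x z)
      _ = d * (1-θ) ^ (f x) := by rw [hcard x]; simp [nsmul_eq_mul]
  have hWlb : ∀ x, (d:ℝ) * (1-θ) ^ (f x + 1) ≤ W x := by
    intro x
    calc (d:ℝ) * (1-θ) ^ (f x + 1) = (G.neighborFinset x).card • ((1-θ) ^ (f x + 1)) := by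
          rw [hcard x]; simp [nsmul_eq_mul]
      _ ≤ W x := Finset.card_nsmul_le_sum _ _ _
          (fun z hz => hwlb x z (by rwa [SimpleGraph.mem_neighborFinset] at hz))
  have hWpos : ∀ x, 0 < W x := by
    intro x
    have : (0:ℝ) < d * (1-θ) ^ (f x + 1) := by positivity
    linarith [hWlb x]
  have hQlb : ∀ x y, G.Adj x y → (1-ε)/d ≤ w x y / W x := by
    intro x y hxy
    have h1 : (1-ε)/d ≤ (1-θ)/d := (div_le_div_iff_of_pos_right hdpos).mpr (by linarith)
    have h2 : (1-θ)/d = ((1-θ) ^ (f x + 1)) / (d * (1-θ) ^ (f x)) := by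
      rw [pow_succ]
      field_simp
    have h3 : ((1-θ) ^ (f x + 1)) / (d * (1-θ) ^ (f x)) ≤ w x y / W x :=
      div_le_div₀ (le_of_lt (hwpos x y)) (hwlb x y hxy) (hWpos x) (hWub x)
    linarith [h2 ▸ h3, h1]
  have hfilter : ∀ x : V, Finset.univ.filter (G.Adj x) = G.neighborFinset x := by
    intro x; ext z; simp [SimpleGraph.mem_neighborFinset]
  have hQsum : ∀ x, ∑ y, (if G.Adj x y then w x y / W x else 0) = 1 := by
    intro x
    rw [Finset.sum_ite, Finset.sum_const_zero, add_zero, hfilter, ← Finset.sum_div,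
      div_self (hWpos x).ne']
  have hPsum : ∀ x : V, ∑ y, (if G.Adj x y then (1:ℝ)/d else 0) = 1 := by
    intro x
    rw [Finset.sum_ite, Finset.sum_const_zero, add_zero, hfilter, Finset.sum_const, hcard x]
    field_simp
    rw [nsmul_eq_mul]; field_simp
  by_cases hε0 : ε = 0
  · -- then θ = 0, Q = P
    have hθ0' : θ = 0 := le_antisymm (hε0 ▸ hεθ) hθ0
    refine ⟨fun x y => if G.Adj x y then w x y / W x else 0, ?_, ?_, ?_, ?_⟩
    · intro x y
      dsimp only
      by_cases h : G.Adj x y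
      · simp only [h, if_true]
        exact le_of_lt (div_pos (hwpos x y) (hWpos x))
      · simp [h]
    · intro x y h; simp [h]
    · exact hQsum
    · intro x y
      subst hε0
      dsimp only
      by_cases h : G.Adj x y
      · have hw1 : ∀ z, w x z = 1 := by intro z; rw [hw, hθ0']; simp
        have hWd : W x = d := by
          rw [hW]; simp only [hw1]; rw [Finset.sum_const, hcard x]; simp
        have : (∑ z ∈ G.neighborFinset x, w x z) = W x := rfl
        simp [h, this, hWd, hw1 y]
      · simp [h]
  · have hεpos : 0 < ε := lt_of_le_of_ne (hθ0.trans hεθ) (Ne.symm hε0)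
    refine ⟨fun x y => ((if G.Adj x y then w x y / W x else 0)
        - (1-ε) * (if G.Adj x y then (1:ℝ)/d else 0)) / ε, ?_, ?_, ?_, ?_⟩
    · intro x y
      dsimp only
      by_cases h : G.Adj x y
      · simp only [h, if_true]
        apply div_nonneg _ hεpos.le
        have h1 := hQlb x y h
        rw [sub_nonneg, div_eq_mul_inv] at *
        nlinarith
      · simp [h]
    · intro x y h; simp [h]
    · intro x
      dsimp only
      rw [← Finset.sum_div, Finset.sum_sub_distrib, hQsum, ← Finset.mul_sum, hPsum]
      field_simp
      ring
    · intro x y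
      dsimp only
      rw [mul_comm ε, div_mul_cancel₀ _ hε0]
      ring
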